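/- Let (a_n) be a strictly increasing sequence of positive integers with a_{n+1}/a_n → ∞, and let Q = {a_n : n ≥ 0}. Then for every positive integer m and every integer c ≠ 0, the set of (pairwise distinct) tuples (v_1,...,v_n) from Q with c_1 v_1 + ... + c_n v_n = c (where c_1,...,c_n are fixed nonzero integers) is finite, with a bound on the number of solutions independent of c. -/

import Mathlib

open Finset

lemma ncard_biUnion_le' {α β : Type*} {T : Set β} (hT : T.Finite) (f : β → Set α) (B : ℕ) :
    (∀ t ∈ T, (f t).Finite ∧ (f t).ncard ≤ B) →
    (⋃ t ∈ T, f t).Finite ∧ (⋃ t ∈ T, f t).ncard ≤ T.ncard * B := by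
  refine Set.Finite.induction_on _ hT (by simp) ?_
  intro x s hx hs ih hf
  have h1 := hf x (Set.mem_insert _ _)
  have h2 := ih fun t ht => hf t (Set.mem_insert_of_mem _ ht)
  rw [Set.biUnion_insert]
  refine ⟨h1.1.union h2.1, ?_⟩
  calc (f x ∪ ⋃ t ∈ s, f t).ncard ≤ (f x).ncard + (⋃ t ∈ s, f t).ncard :=
        Set.ncard_union_le _ _
    _ ≤ B + s.ncard * B := add_le_add h1.2 h2.2
    _ = (insert x s).ncard * B := by rw [Set.ncard_insert_of_notMem hx hs]; ring

theorem stmt2_main (a : ℕ → ℕ) (hpos : ∀ n, 0 < a n) (hmono : StrictMono a)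
    (hratio : ∀ C : ℕ, ∃ N, ∀ n ≥ N, C * a n < a (n + 1)) :
    ∀ n : ℕ, ∀ c : Fin n → ℤ, (∀ i, c i ≠ 0) →
    ∃ N : ℕ, ∀ cc : ℤ,
      ({k : Fin n → ℕ | Function.Injective k ∧ (∑ i, c i * (a (k i) : ℤ)) = cc}.Finite ∧
       {k : Fin n → ℕ | Function.Injective k ∧ (∑ i, c i * (a (k i) : ℤ)) = cc}.ncard ≤ N) := by
  intro n
  induction n with
  | zero =>
    intro c hc
    refine ⟨1, fun cc => ?_⟩
    have hsub : {k : Fin 0 → ℕ | Function.Injective k ∧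
        (∑ i, c i * (a (k i) : ℤ)) = cc}.Subsingleton :=
      fun x _ y _ => Subsingleton.elim x y
    refine ⟨hsub.finite, ?_⟩
    rcases hsub.eq_empty_or_singleton with h | ⟨x, h⟩ <;> rw [h] <;> simp
  | succ n IH =>
    intro c hc
    set S : ℕ := ∑ i, (c i).natAbs with hS
    have hScast : (S : ℤ) = ∑ i, |c i| := by
      rw [hS]; push_cast [Int.natCast_natAbs]; ring
    obtain ⟨N₀, hN₀⟩ := hratio (2 * S)
    have hIH : ∀ j : Fin (n+1), ∃ N : ℕ, ∀ cc : ℤ,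
        ({r : Fin n → ℕ | Function.Injective r ∧
          (∑ i, c (j.succAbove i) * (a (r i) : ℤ)) = cc}.Finite ∧
         {r : Fin n → ℕ | Function.Injective r ∧
          (∑ i, c (j.succAbove i) * (a (r i) : ℤ)) = cc}.ncard ≤ N) :=
      fun j => IH (fun i => c (j.succAbove i)) (fun i => hc _)
    choose N' hN' using hIH
    set M := Finset.univ.sup N' with hM
    refine ⟨(n+1) * ((N₀ + 2) * M), fun cc => ?_⟩
    -- key bound B : |cc| ≤ S * a (k j) for max j
    have habs : ∀ (k : Fin (n+1) → ℕ) (j : Fin (n+1)),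
        (∑ i, c i * (a (k i) : ℤ)) = cc → (∀ i, k i ≤ k j) →
        |cc| ≤ (S : ℤ) * a (k j) := by
      intro k j hsum hmax
      have h1 : |cc| ≤ ∑ i, |c i| * (a (k i) : ℤ) := by
        rw [← hsum]
        refine (Finset.abs_sum_le_sum_abs _ _).trans (Finset.sum_le_sum fun i _ => ?_)
        rw [abs_mul, abs_of_nonneg (by positivity : (0:ℤ) ≤ ((a (k i)) : ℤ))]
      have h2 : ∑ i, |c i| * (a (k i) : ℤ) ≤ ∑ i, |c i| * (a (k j) : ℤ) :=
        Finset.sum_le_sum fun i _ => mul_le_mul_of_nonneg_left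
          (by exact_mod_cast hmono.monotone (hmax i)) (abs_nonneg _)
      calc |cc| ≤ ∑ i, |c i| * (a (k i) : ℤ) := h1
        _ ≤ ∑ i, |c i| * (a (k j) : ℤ) := h2
        _ = (S : ℤ) * a (k j) := by rw [← Finset.sum_mul, hScast]
    -- key bound A : if top index large then a (k j) < 2|cc|
    have htop : ∀ (k : Fin (n+1) → ℕ) (j : Fin (n+1)), Function.Injective k →
        (∑ i, c i * (a (k i) : ℤ)) = cc → (∀ i, k i ≤ k j) → N₀ + 1 ≤ k j →
        (a (k j) : ℤ) < 2 * |cc| := by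
      intro k j hinj hsum hmax hge
      obtain ⟨s, hs⟩ : ∃ s, k j = s + 1 := ⟨k j - 1, by omega⟩
      have hsN : N₀ ≤ s := by omega
      have hki : ∀ i : Fin n, k (j.succAbove i) ≤ s := by
        intro i
        have h1 : k (j.succAbove i) ≠ k j := fun h => Fin.succAbove_ne j i (hinj h)
        have h2 := hmax (j.succAbove i)
        omega
      rw [Fin.sum_univ_succAbove (fun i => c i * (a (k i) : ℤ)) j] at hsum
      have hR : |∑ i : Fin n, c (j.succAbove i) * (a (k (j.succAbove i)) : ℤ)|
          ≤ (S : ℤ) * a s := by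
        refine (Finset.abs_sum_le_sum_abs _ _).trans ?_
        have h1 : ∀ i : Fin n, |c (j.succAbove i) * (a (k (j.succAbove i)) : ℤ)|
            ≤ |c (j.succAbove i)| * (a s : ℤ) := by
          intro i
          rw [abs_mul, abs_of_nonneg (by positivity : (0:ℤ) ≤ ((a (k (j.succAbove i))) : ℤ))]
          exact mul_le_mul_of_nonneg_left
            (by exact_mod_cast hmono.monotone (hki i)) (abs_nonneg _)
        refine (Finset.sum_le_sum fun i _ => h1 i).trans ?_
        rw [← Finset.sum_mul]
        refine mul_le_mul_of_nonneg_right ?_ (by positivity)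
        have hdec := Fin.sum_univ_succAbove (fun i => |c i|) j
        have hcj : (0:ℤ) ≤ |c j| := abs_nonneg _
        rw [hScast, hdec]
        linarith
      have hcj1 : (1:ℤ) ≤ |c j| := Int.one_le_abs (by simpa using hc j)
      have hat : (a (k j) : ℤ) ≤ |cc| + (S : ℤ) * a s := by
        have heq : c j * ((a (k j)) : ℤ) =
            cc - ∑ i : Fin n, c (j.succAbove i) * (a (k (j.succAbove i)) : ℤ) := by
          linarith [hsum]
        have h1 : |c j * ((a (k j)) : ℤ)| ≤ |cc| + (S : ℤ) * a s := by
          rw [heq]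
          exact (abs_sub _ _).trans (add_le_add le_rfl hR)
        have h2 : (a (k j) : ℤ) ≤ |c j * ((a (k j)) : ℤ)| := by
          rw [abs_mul, abs_of_nonneg (by positivity : (0:ℤ) ≤ ((a (k j)) : ℤ))]
          nlinarith [(Nat.cast_pos (α := ℤ)).2 (hpos (k j))]
        linarith
      have hgrow : ((2 * S * a s : ℕ) : ℤ) < (a (s+1) : ℤ) := by
        exact_mod_cast hN₀ s hsN
      rw [hs] at hat ⊢
      push_cast at hgrow
      linarith
    -- set of possible "large" top values is a subsingleton
    set E : Set ℕ := {t | N₀ + 1 ≤ t ∧ ∃ k : Fin (n+1) → ℕ, ∃ j : Fin (n+1),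
        Function.Injective k ∧ (∑ i, c i * (a (k i) : ℤ)) = cc ∧
        (∀ i, k i ≤ k j) ∧ k j = t} with hEdef
    have hEkey : ∀ t t', t ∈ E → t' ∈ E → t < t' → False := by
      intro t t' ht ht' hlt
      obtain ⟨hge, k, j, hinj, hsum, hmax, hkj⟩ := ht
      obtain ⟨hge', k', j', hinj', hsum', hmax', hkj'⟩ := ht'
      have h1 := habs k j hsum hmax
      rw [hkj] at h1
      have h2 := htop k' j' hinj' hsum' hmax' (by omega)
      rw [hkj'] at h2
      have h3 : 2 * S * a t < a (t + 1) := hN₀ t (by omega)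
      have h4 : a (t+1) ≤ a t' := hmono.monotone (by omega)
      have h3' : ((2 * S * a t : ℕ) : ℤ) < ((a (t+1) : ℕ) : ℤ) := by exact_mod_cast h3
      have h4' : ((a (t+1) : ℕ) : ℤ) ≤ ((a t' : ℕ) : ℤ) := by exact_mod_cast h4
      push_cast at h3'
      linarith
    have hE : E.Subsingleton := by
      intro t ht t' ht'
      rcases lt_trichotomy t t' with h | h | h
      · exact absurd (hEkey t t' ht ht' h) (not_false)
      · exact h
      · exact absurd (hEkey t' t ht' ht h) (not_false)
    set T : Set ℕ := Set.Iic N₀ ∪ E with hT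
    have hTfin : T.Finite := (Set.finite_Iic N₀).union hE.finite
    have hTcard : T.ncard ≤ N₀ + 2 := by
      refine (Set.ncard_union_le _ _).trans ?_
      have h1 : (Set.Iic N₀).ncard = N₀ + 1 := by
        rw [← Finset.coe_Iic, Set.ncard_coe_finset, Nat.card_Iic]
      have h2 : E.ncard ≤ 1 := by
        rcases hE.eq_empty_or_singleton with h | ⟨x, h⟩ <;> simp [h]
      omega
    -- cover
    set Sol : Fin (n+1) → ℤ → Set (Fin n → ℕ) := fun j d =>
      {r : Fin n → ℕ | Function.Injective r ∧
        (∑ i, c (j.succAbove i) * (a (r i) : ℤ)) = d} with hSol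
    have hcover : {k : Fin (n+1) → ℕ | Function.Injective k ∧
        (∑ i, c i * (a (k i) : ℤ)) = cc} ⊆
        ⋃ j ∈ (Set.univ : Set (Fin (n+1))), ⋃ t ∈ T,
          (fun r : Fin n → ℕ => Fin.insertNth (α := fun _ => ℕ) j t r) '' Sol j (cc - c j * (a t : ℤ)) := by
      rintro k ⟨hinj, hsum⟩
      obtain ⟨j, hj⟩ := Finite.exists_max k
      refine Set.mem_biUnion (Set.mem_univ j) (Set.mem_biUnion (?_ : k j ∈ T) ?_)
      · by_cases hle : k j ≤ N₀
        · exact Set.mem_union_left _ (Set.mem_Iic.2 hle)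
        · exact Set.mem_union_right _ ⟨by omega, k, j, hinj, hsum, hj, rfl⟩
      · refine ⟨j.removeNth k, ⟨?_, ?_⟩, ?_⟩
        · exact fun i i' h => Fin.succAbove_right_injective (hinj h)
        · have hdec := Fin.sum_univ_succAbove (fun i => c i * (a (k i) : ℤ)) j
          rw [hdec] at hsum
          simp only [Fin.removeNth]
          linarith
        · exact Fin.insertNth_self_removeNth j k
    -- count
    have hpiece : ∀ j ∈ (Set.univ : Set (Fin (n+1))),
        (⋃ t ∈ T, (fun r : Fin n → ℕ => Fin.insertNth (α := fun _ => ℕ) j t r) ''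
          Sol j (cc - c j * (a t : ℤ))).Finite ∧
        (⋃ t ∈ T, (fun r : Fin n → ℕ => Fin.insertNth (α := fun _ => ℕ) j t r) ''
          Sol j (cc - c j * (a t : ℤ))).ncard ≤ (N₀ + 2) * M := by
      intro j _
      have h := ncard_biUnion_le' hTfin
        (fun t => (fun r : Fin n → ℕ => Fin.insertNth (α := fun _ => ℕ) j t r) '' Sol j (cc - c j * (a t : ℤ))) M ?_
      · exact ⟨h.1, h.2.trans (Nat.mul_le_mul_right M hTcard)⟩
      · intro t _
        have hfin := (hN' j (cc - c j * (a t : ℤ))).1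
        refine ⟨hfin.image _, ?_⟩
        exact (Set.ncard_image_le hfin).trans
          ((hN' j (cc - c j * (a t : ℤ))).2.trans (Finset.le_sup (Finset.mem_univ j)))
    have hbig := ncard_biUnion_le' (Set.finite_univ)
      (fun j : Fin (n+1) => ⋃ t ∈ T, (fun r : Fin n → ℕ => Fin.insertNth (α := fun _ => ℕ) j t r) ''
        Sol j (cc - c j * (a t : ℤ))) ((N₀ + 2) * M) hpiece
    have hufin := hbig.1
    refine ⟨hufin.subset hcover, ?_⟩
    refine (Set.ncard_le_ncard hcover hufin).trans (hbig.2.trans ?_)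
    have : (Set.univ : Set (Fin (n+1))).ncard = n + 1 := by
      rw [Set.ncard_univ]; simp
    rw [this]

/-- with `Q = {a_n}`, fixed nonzero coefficients `c₁,…,c_n`, for every positive
integer `m` and every integer `c ≠ 0`, the set of pairwise distinct tuples from `Q` with
`c₁v₁+⋯+c_nv_n = c` is finite, with a bound on the number of solutions independent of `c`. -/
theorem stmt2 (a : ℕ → ℕ) (hpos : ∀ n, 0 < a n) (hmono : StrictMono a)
    (hratio : ∀ C : ℕ, ∃ N, ∀ n ≥ N, C * a n < a (n + 1))
    (n : ℕ) (hn : 0 < n) (c : Fin n → ℤ) (hc : ∀ i, c i ≠ 0) :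
    ∀ m : ℕ, 0 < m → ∃ N : ℕ, ∀ cc : ℤ, cc ≠ 0 →
      ({v : Fin n → ℕ | (∀ i, v i ∈ Set.range a) ∧ Function.Injective v ∧
          (∑ i, c i * (v i : ℤ)) = cc}.Finite ∧
        {v : Fin n → ℕ | (∀ i, v i ∈ Set.range a) ∧ Function.Injective v ∧
          (∑ i, c i * (v i : ℤ)) = cc}.ncard ≤ N) := by
  intro m hm
  obtain ⟨N, hN⟩ := stmt2_main a hpos hmono hratio n c hc
  refine ⟨N, fun cc _ => ?_⟩
  obtain ⟨hfin, hcard⟩ := hN cc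
  have himg : {v : Fin n → ℕ | (∀ i, v i ∈ Set.range a) ∧ Function.Injective v ∧
      (∑ i, c i * (v i : ℤ)) = cc} =
      (fun k : Fin n → ℕ => fun i => a (k i)) ''
        {k : Fin n → ℕ | Function.Injective k ∧ (∑ i, c i * (a (k i) : ℤ)) = cc} := by
    ext v
    constructor
    · rintro ⟨hr, hinj, hsum⟩
      choose k hk using fun i => hr i
      refine ⟨k, ⟨?_, ?_⟩, ?_⟩
      · intro i i' h
        apply_fun a at h
        rw [hk i, hk i'] at h
        exact hinj h
      · simp only [hk]; exact hsum
      · funext i; exact hk i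
    · rintro ⟨k, ⟨hinj, hsum⟩, rfl⟩
      exact ⟨fun i => ⟨k i, rfl⟩,
        fun i i' h => hinj (hmono.injective h), by simpa using hsum⟩
  rw [himg]
  exact ⟨hfin.image _, (Set.ncard_image_le hfin).trans hcard⟩
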